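/- Let H be a subgroup of an abelian group G and let S ⊆ G be H-invariant (i.e., S + h = S for all h ∈ H). Then S is a minimal complement in G if and only if the image of S in G/H is a minimal complement in G/H. -/

import Mathlib

open Pointwise

/-- An `H`-invariant set `S` is a minimal complement in `G` iff its image in `G/H` is a
minimal complement in `G/H`. -/
theorem invariant_minimal_complement_iff {G : Type*} [AddCommGroup G] (H : AddSubgroup G)
    (S : Set G) (hS : ∀ h ∈ H, (fun x => x + h) '' S = S) :
    (∃ W : Set G, W + S = Set.univ ∧ ∀ S' : Set G, S' ⊂ S → W + S' ≠ Set.univ) ↔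
      (∃ W : Set (G ⧸ H), W + (QuotientAddGroup.mk' H '' S) = Set.univ ∧
        ∀ S' : Set (G ⧸ H), S' ⊂ QuotientAddGroup.mk' H '' S → W + S' ≠ Set.univ) := by
  set π := QuotientAddGroup.mk' H with hπdef
  have hπsurj : Function.Surjective π := QuotientAddGroup.mk'_surjective H
  have hsat : ∀ x s, s ∈ S → π x = π s → x ∈ S := by
    intro x s hs hxs
    have hH : -s + x ∈ H := by
      have : (s : G ⧸ H) = (x : G ⧸ H) := hxs.symm
      rwa [QuotientAddGroup.eq] at this
    have h2 := hS (-s + x) hH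
    rw [← h2]
    exact ⟨s, hs, add_neg_cancel_left s x⟩
  have hout : ∀ q : G ⧸ H, π q.out = q := fun q => QuotientAddGroup.out_eq' q
  constructor
  · rintro ⟨W, hW, hmin⟩
    refine ⟨π '' W, ?_, ?_⟩
    · rw [← Set.image_add, hW, Set.image_univ]
      exact Set.range_eq_univ.mpr hπsurj
    · rintro T hT heq
      obtain ⟨xb, hxbS, hxbT⟩ := Set.exists_of_ssubset hT
      obtain ⟨s0, hs0, rfl⟩ := hxbS
      set S' : Set G := S ∩ π ⁻¹' T with hS'def
      have hss : S' ⊂ S := by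
        constructor
        · exact Set.inter_subset_left
        · intro hle
          exact hxbT (hle hs0).2
      refine hmin S' hss ?_
      ext g
      simp only [Set.mem_univ, iff_true]
      have : π g ∈ π '' W + T := by rw [heq]; trivial
      obtain ⟨wb, hwb, tb, htb, hsum⟩ := Set.mem_add.mp this
      obtain ⟨w, hw, rfl⟩ := hwb
      refine Set.mem_add.mpr ⟨w, hw, g - w, ?_, by abel⟩
      have hπgw : π (g - w) = tb := by
        rw [map_sub, ← hsum]; abel
      obtain ⟨s, hsS, hst⟩ := hT.1 htb
      constructor
      · exact hsat _ s hsS (by rw [hπgw, hst])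
      · rw [Set.mem_preimage, hπgw]; exact htb
  · rintro ⟨Wb, hWb, hmin⟩
    refine ⟨(fun q : G ⧸ H => q.out) '' Wb, ?_, ?_⟩
    · ext g
      simp only [Set.mem_univ, iff_true]
      have : π g ∈ Wb + π '' S := by rw [hWb]; trivial
      obtain ⟨wb, hwb, tb, htb, hsum⟩ := Set.mem_add.mp this
      obtain ⟨s, hsS, rfl⟩ := htb
      refine Set.mem_add.mpr ⟨wb.out, ⟨wb, hwb, rfl⟩, g - wb.out, ?_, by abel⟩
      exact hsat _ s hsS (by rw [map_sub, hout, ← hsum]; abel)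
    · rintro S' hss heq
      have hWim : π '' ((fun q : G ⧸ H => q.out) '' Wb) = Wb := by
        ext q
        constructor
        · rintro ⟨w, ⟨wb, hwb, rfl⟩, rfl⟩
          rwa [hout]
        · intro hq
          exact ⟨q.out, ⟨q, hq, rfl⟩, hout q⟩
      have himg : π '' S' = π '' S := by
        by_contra hne
        refine hmin (π '' S') ⟨Set.image_mono hss.1, ?_⟩ ?_
        · intro hle
          exact hne (le_antisymm (Set.image_mono hss.1) hle)
        · rw [← hWim, ← Set.image_add, heq, Set.image_univ]
          exact Set.range_eq_univ.mpr hπsurj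
      obtain ⟨s, hsS, hsS'⟩ := Set.exists_of_ssubset hss
      have hprop : (π '' S) \ {π s} ⊂ π '' S := by
        constructor
        · exact Set.diff_subset
        · intro hle
          exact ((hle ⟨s, hsS, rfl⟩).2 rfl).elim
      have hnc := hmin _ hprop
      obtain ⟨gb, hgb⟩ : ∃ gb : G ⧸ H, gb ∉ Wb + ((π '' S) \ {π s}) := by
        by_contra hc
        push_neg at hc
        exact hnc (Set.eq_univ_of_forall hc)
      have hgbu : gb ∈ Wb + π '' S := by rw [hWb]; trivial
      obtain ⟨wb, hwb, tb, htb, hsum⟩ := Set.mem_add.mp hgbu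
      have htbeq : tb = π s := by
        by_contra hne
        exact hgb (Set.mem_add.mpr ⟨wb, hwb, tb, ⟨htb, hne⟩, hsum⟩)
      -- consider g = out wb + s
      have hg : wb.out + s ∈ (fun q : G ⧸ H => q.out) '' Wb + S' := by rw [heq]; trivial
      obtain ⟨w, ⟨wb', hwb', rfl⟩, s', hs', hsum'⟩ := Set.mem_add.mp hg
      have hπs' : π s' ∈ π '' S := by rw [← himg]; exact ⟨s', hs', rfl⟩
      have hπeq : wb' + π s' = gb := by
        have h := congrArg π hsum'
        simp only [map_add, hout] at h
        rw [h, ← htbeq]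
        exact hsum
      have hπs's : π s' = π s := by
        by_contra hne
        exact hgb (Set.mem_add.mpr ⟨wb', hwb', π s', ⟨hπs', hne⟩, hπeq⟩)
      have hwbeq : wb' = wb := by
        have h1 : wb' + π s = gb := by rw [← hπs's]; exact hπeq
        have h2 : wb + π s = gb := by rw [← htbeq]; exact hsum
        exact add_right_cancel (h1.trans h2.symm)
      have : s' = s := by
        have := hsum'
        rw [hwbeq] at this
        exact add_left_cancel this
      exact hsS' (this ▸ hs')
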